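/- For fixed probability distribution Q on X̂ with full support, the function s ↦ −Σ_x P(x) ln(Σ_{x̂} Q(x̂) e^{−s·d(x,x̂)}) − sD is concave on [0,∞). -/

import Mathlib

open Real Finset

/-- Key log-sum-exp convexity inequality, via Hölder. -/
lemma key_logsum {n : Type*} [Fintype n] [Nonempty n]
    (Q : n → ℝ) (hQ : ∀ i, 0 < Q i) (a : n → ℝ)
    (s t la mu : ℝ) (hla : 0 ≤ la) (hmu : 0 ≤ mu) (hlm : la + mu = 1) :
    Real.log (∑ i, Q i * Real.exp (-((la * s + mu * t) * a i))) ≤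
      la * Real.log (∑ i, Q i * Real.exp (-(s * a i))) +
      mu * Real.log (∑ i, Q i * Real.exp (-(t * a i))) := by
  rcases hla.eq_or_lt with h0 | hla'
  · have : mu = 1 := by linarith
    subst this; rw [← h0]; simp
  rcases hmu.eq_or_lt with h0 | hmu'
  · have : la = 1 := by linarith
    subst this; rw [← h0]; simp
  have hla1 : la < 1 := by linarith
  have hA : 0 < ∑ i, Q i * Real.exp (-(s * a i)) :=
    Finset.sum_pos (fun i _ => mul_pos (hQ i) (Real.exp_pos _)) Finset.univ_nonempty
  have hB : 0 < ∑ i, Q i * Real.exp (-(t * a i)) :=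
    Finset.sum_pos (fun i _ => mul_pos (hQ i) (Real.exp_pos _)) Finset.univ_nonempty
  have hC : 0 < ∑ i, Q i * Real.exp (-((la * s + mu * t) * a i)) :=
    Finset.sum_pos (fun i _ => mul_pos (hQ i) (Real.exp_pos _)) Finset.univ_nonempty
  have hpq : (1 / la).HolderConjugate (1 / mu) := by
    constructor
    · simp only [one_div, inv_inv, inv_one]; exact hlm
    · exact one_div_pos.mpr hla'
    · exact one_div_pos.mpr hmu'
  have hpos : ∀ (u : ℝ) (i : n), 0 < Q i * Real.exp (-(u * a i)) :=
    fun u i => mul_pos (hQ i) (Real.exp_pos _)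
  have H := Real.inner_le_Lp_mul_Lq_of_nonneg (s := Finset.univ)
      (f := fun i => (Q i * Real.exp (-(s * a i))) ^ la)
      (g := fun i => (Q i * Real.exp (-(t * a i))) ^ mu) hpq
      (fun i _ => Real.rpow_nonneg (hpos s i).le la)
      (fun i _ => Real.rpow_nonneg (hpos t i).le mu)
  rw [one_div_one_div, one_div_one_div] at H
  have e1 : ∀ i : n, ((Q i * Real.exp (-(s * a i))) ^ la) ^ (1 / la)
      = Q i * Real.exp (-(s * a i)) := by
    intro i
    rw [← Real.rpow_mul (hpos s i).le, mul_one_div_cancel hla'.ne', Real.rpow_one]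
  have e2 : ∀ i : n, ((Q i * Real.exp (-(t * a i))) ^ mu) ^ (1 / mu)
      = Q i * Real.exp (-(t * a i)) := by
    intro i
    rw [← Real.rpow_mul (hpos t i).le, mul_one_div_cancel hmu'.ne', Real.rpow_one]
  have e3 : ∀ i : n, (Q i * Real.exp (-(s * a i))) ^ la *
      (Q i * Real.exp (-(t * a i))) ^ mu
      = Q i * Real.exp (-((la * s + mu * t) * a i)) := by
    intro i
    rw [Real.rpow_def_of_pos (hpos s i), Real.rpow_def_of_pos (hpos t i),
      ← Real.exp_add, Real.log_mul (hQ i).ne' (Real.exp_ne_zero _),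
      Real.log_mul (hQ i).ne' (Real.exp_ne_zero _), Real.log_exp, Real.log_exp]
    nth_rewrite 3 [show Q i = Real.exp (Real.log (Q i)) from (Real.exp_log (hQ i)).symm]
    rw [← Real.exp_add]
    congr 1
    linear_combination Real.log (Q i) * hlm
  simp only [e3] at H
  calc Real.log (∑ i, Q i * Real.exp (-((la * s + mu * t) * a i)))
      ≤ Real.log ((∑ i, ((Q i * Real.exp (-(s * a i))) ^ la) ^ (1 / la)) ^ la *
          (∑ i, ((Q i * Real.exp (-(t * a i))) ^ mu) ^ (1 / mu)) ^ mu) := by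
        apply Real.log_le_log hC H
    _ = la * Real.log (∑ i, Q i * Real.exp (-(s * a i))) +
        mu * Real.log (∑ i, Q i * Real.exp (-(t * a i))) := by
        simp only [e1, e2]
        rw [Real.log_mul (Real.rpow_pos_of_pos hA la).ne'
          (Real.rpow_pos_of_pos hB mu).ne', Real.log_rpow hA, Real.log_rpow hB]

/-- For a fixed fully supported distribution `Q` on `X̂`, the function
`s ↦ -∑ₓ P(x) ln(∑_{x̂} Q(x̂) e^{-s d(x,x̂)}) - s D` is concave on `[0,∞)`. -/
theorem F_concave_in_s (X Xhat : Type*) [Fintype X] [Fintype Xhat]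
    (P : X → ℝ) (hP : ∀ x, 0 ≤ P x) (hPsum : ∑ x, P x = 1)
    (Q : Xhat → ℝ) (hQ : ∀ xh, 0 < Q xh) (hQsum : ∑ xh, Q xh = 1)
    (d : X → Xhat → ℝ) (hd : ∀ x xh, 0 ≤ d x xh)
    (D : ℝ) (hD : 0 ≤ D) :
    ConcaveOn ℝ (Set.Ici (0 : ℝ))
      (fun s => -(∑ x, P x * Real.log (∑ xh, Q xh * Real.exp (-(s * d x xh))))
        - s * D) := by
  have hne : Nonempty Xhat := by
    by_contra h
    rw [not_nonempty_iff] at h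
    simp at hQsum
  refine ⟨convex_Ici 0, fun s _ t _ la mu hla hmu hlm => ?_⟩
  simp only [smul_eq_mul]
  have key : ∀ x : X,
      Real.log (∑ xh, Q xh * Real.exp (-((la * s + mu * t) * d x xh))) ≤
        la * Real.log (∑ xh, Q xh * Real.exp (-(s * d x xh))) +
        mu * Real.log (∑ xh, Q xh * Real.exp (-(t * d x xh))) :=
    fun x => key_logsum Q hQ (d x) s t la mu hla hmu hlm
  have hsum : ∑ x, P x * Real.log (∑ xh, Q xh * Real.exp (-((la * s + mu * t) * d x xh))) ≤
      ∑ x, P x * (la * Real.log (∑ xh, Q xh * Real.exp (-(s * d x xh))) +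
        mu * Real.log (∑ xh, Q xh * Real.exp (-(t * d x xh)))) :=
    Finset.sum_le_sum (fun x _ => mul_le_mul_of_nonneg_left (key x) (hP x))
  simp only [mul_add, Finset.sum_add_distrib] at hsum
  have h1 : ∑ x, P x * (la * Real.log (∑ xh, Q xh * Real.exp (-(s * d x xh))))
      = la * ∑ x, P x * Real.log (∑ xh, Q xh * Real.exp (-(s * d x xh))) := by
    rw [Finset.mul_sum]; apply Finset.sum_congr rfl; intro x _; ring
  have h2 : ∑ x, P x * (mu * Real.log (∑ xh, Q xh * Real.exp (-(t * d x xh))))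
      = mu * ∑ x, P x * Real.log (∑ xh, Q xh * Real.exp (-(t * d x xh))) := by
    rw [Finset.mul_sum]; apply Finset.sum_congr rfl; intro x _; ring
  rw [h1, h2] at hsum
  nlinarith [hsum]
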